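/- Let D ⊆ R^n be convex, U ⊆ D a convex subset, and let W_1, …, W_q be the path-connected components of D \ U. Then for any index set I ⊆ {1, …, q}, the set K_I = U ∪ (⋃_{i∈I} W_i) is convex. -/

import Mathlib

open Set

private lemma seg_between {E : Type*} [AddCommGroup E] [Module ℝ E] {x y z v w : E}
    (hz : z ∈ segment ℝ x y) (hv : v ∈ segment ℝ x z) (hw : w ∈ segment ℝ z y) :
    z ∈ segment ℝ v w := by
  rw [segment_eq_image'] at hz hv hw
  obtain ⟨t, ⟨ht0, ht1⟩, rfl⟩ := hz
  obtain ⟨p, ⟨hp0, hp1⟩, rfl⟩ := hv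
  obtain ⟨q, ⟨hq0, hq1⟩, rfl⟩ := hw
  set u := y - x with hu
  have hv' : x + p • (x + t • u - x) = x + (p * t) • u := by
    rw [add_sub_cancel_left, smul_smul]
  have hw' : x + t • u + q • (y - (x + t • u)) = x + (t + q * (1 - t)) • u := by
    have : y - (x + t • u) = (1 - t) • u := by rw [hu]; module
    rw [this, smul_smul]; module
  simp only []
  rw [hv', hw']
  set α := p * t with hα
  set β := t + q * (1 - t) with hβ
  have hαt : α ≤ t := mul_le_of_le_one_left ht0 hp1
  have htβ : t ≤ β := le_add_of_nonneg_right (mul_nonneg hq0 (by linarith))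
  rcases eq_or_lt_of_le (hαt.trans htβ) with heq | hlt
  · have : t = α := le_antisymm (heq ▸ htβ) hαt
    rw [this]; exact left_mem_segment ℝ _ _
  · rw [segment_eq_image']
    refine ⟨(t - α) / (β - α), ⟨div_nonneg (by linarith) (by linarith),
      div_le_one_of_le₀ (by linarith) (by linarith)⟩, ?_⟩
    simp only []
    have h1 : x + β • u - (x + α • u) = (β - α) • u := by module
    rw [h1, smul_smul, div_mul_cancel₀ _ (by linarith : β - α ≠ 0)]
    module

/-- The union of a convex set `U ⊆ D` with any family of path-connected components
of `D \ U` is convex. -/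
theorem stmt_2 {n : ℕ} (D U : Set (Fin n → ℝ))
    (hD : Convex ℝ D) (hU : Convex ℝ U) (hUD : U ⊆ D)
    {ι : Type} (W : ι → Set (Fin n → ℝ))
    (hW : ∀ i, ∃ x ∈ D \ U, W i = pathComponentIn (D \ U) x) :
    Convex ℝ (U ∪ ⋃ i, W i) := by
  have hWsub : ∀ i, W i ⊆ D \ U := by
    intro i
    obtain ⟨x₀, _, hWi⟩ := hW i
    rw [hWi]; exact pathComponentIn_subset
  -- if a segment from z to p lies in D and misses U, then z is joined to p in D \ U
  have hsegJ : ∀ z p : Fin n → ℝ, z ∈ D → p ∈ D → (∀ w ∈ segment ℝ z p, w ∉ U) →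
      JoinedIn (D \ U) z p := by
    intro z p hz hp hdisj
    have hsub : segment ℝ z p ⊆ D \ U := fun w hw =>
      ⟨hD.segment_subset hz hp hw, hdisj w hw⟩
    have hpc := (convex_segment z p).isPathConnected ⟨z, left_mem_segment ℝ z p⟩
    exact (hpc.joinedIn z (left_mem_segment ℝ z p) p (right_mem_segment ℝ z p)).mono hsub
  have hjoinW : ∀ z p : Fin n → ℝ, p ∈ ⋃ i, W i → JoinedIn (D \ U) z p → z ∈ ⋃ i, W i := by
    intro z p hp hj
    obtain ⟨i, hi⟩ := mem_iUnion.1 hp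
    obtain ⟨x₀, _, hWi⟩ := hW i
    rw [hWi] at hi
    have : JoinedIn (D \ U) x₀ z := hi.trans hj.symm
    exact mem_iUnion.2 ⟨i, hWi ▸ this⟩
  rintro x hx y hy a b ha hb hab
  set z := a • x + b • y with hzdef
  have hzseg : z ∈ segment ℝ x y := ⟨a, b, ha, hb, hab, rfl⟩
  by_cases hzU : z ∈ U
  · exact Or.inl hzU
  have hxD : x ∈ D := hx.elim (fun h => hUD h) (fun h => ((mem_iUnion.1 h).choose_spec
    |> hWsub _ |>.1))
  have hyD : y ∈ D := hy.elim (fun h => hUD h) (fun h => ((mem_iUnion.1 h).choose_spec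
    |> hWsub _ |>.1))
  have hzD : z ∈ D := hD.segment_subset hxD hyD hzseg
  right
  rcases hx with hxU | hxW
  · rcases hy with hyU | hyW
    · exact absurd (hU hxU hyU ha hb hab) hzU
    · -- x ∈ U, y in a component: segment z y misses U
      refine hjoinW z y hyW (hsegJ z y hzD hyD ?_)
      intro w hw hwU
      exact hzU (hU.segment_subset hxU hwU
        (seg_between hzseg (left_mem_segment ℝ x z) hw))
  · rcases hy with hyU | hyW
    · -- symmetric: segment z x misses U
      have hzseg' : z ∈ segment ℝ y x := by rwa [segment_symm]
      refine hjoinW z x hxW (hsegJ z x hzD hxD ?_)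
      intro w hw hwU
      exact hzU (hU.segment_subset hyU hwU
        (seg_between hzseg' (left_mem_segment ℝ y z) hw))
    · by_cases hzy : ∀ w ∈ segment ℝ z y, w ∉ U
      · exact hjoinW z y hyW (hsegJ z y hzD hyD hzy)
      · push_neg at hzy
        obtain ⟨w, hw, hwU⟩ := hzy
        refine hjoinW z x hxW (hsegJ z x hzD hxD ?_)
        intro v hv hvU
        have hv' : v ∈ segment ℝ x z := by rwa [segment_symm]
        exact hzU (hU.segment_subset hvU hwU (seg_between hzseg hv' hw))
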